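/- Let P be a simple thin polyomino. Then the complement graph Ḡ_P is chordal if and only if P is a short brush polyomino. -/

import Mathlib

/-- A cell of the grid, identified with its lower-left corner. -/
abbrev Cell : Type := ℤ × ℤ

/-- Two cells are adjacent if they differ by `(±1,0)` or `(0,±1)`. -/
def Adjacent (c d : Cell) : Prop :=
  (c.1 = d.1 ∧ (c.2 = d.2 + 1 ∨ d.2 = c.2 + 1)) ∨
  (c.2 = d.2 ∧ (c.1 = d.1 + 1 ∨ d.1 = c.1 + 1))

/-- A polyomino: a finite nonempty set of cells, any two of which are joined by a
path of adjacent cells inside the set. -/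
def IsPolyomino (P : Finset Cell) : Prop :=
  P.Nonempty ∧ ∀ c ∈ P, ∀ d ∈ P,
    Relation.ReflTransGen (fun a b => Adjacent a b ∧ a ∈ P ∧ b ∈ P) c d

/-- A horizontal segment of consecutive cells in a row. -/
def IsHSeg (S : Finset Cell) : Prop :=
  ∃ y a b : ℤ, a ≤ b ∧ S = (Finset.Icc a b).image (fun x => (x, y))

/-- A vertical segment of consecutive cells in a column. -/
def IsVSeg (S : Finset Cell) : Prop :=
  ∃ x a b : ℤ, a ≤ b ∧ S = (Finset.Icc a b).image (fun y => (x, y))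

/-- A maximal horizontal cell interval of `P`. -/
def IsMaxHInterval (P I : Finset Cell) : Prop :=
  IsHSeg I ∧ I ⊆ P ∧ ∀ I', IsHSeg I' → I' ⊆ P → I ⊆ I' → I' = I

/-- A maximal vertical cell interval of `P`. -/
def IsMaxVInterval (P I : Finset Cell) : Prop :=
  IsVSeg I ∧ I ⊆ P ∧ ∀ I', IsVSeg I' → I' ⊆ P → I ⊆ I' → I' = I

/-- A maximal cell interval of `P`. -/
def IsMaxInterval (P I : Finset Cell) : Prop :=
  IsMaxHInterval P I ∨ IsMaxVInterval P I

/-- Two distinct cells of `P` attack each other if they lie in a common maximal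
cell interval of `P`. -/
def Attacks (P : Finset Cell) (c d : Cell) : Prop :=
  c ≠ d ∧ ∃ I, IsMaxInterval P I ∧ c ∈ I ∧ d ∈ I

/-- A set of pairwise non-attacking cells of `P` (a face of the rook complex). -/
def IsRookSet (P F : Finset Cell) : Prop :=
  F ⊆ P ∧ ∀ c ∈ F, ∀ d ∈ F, ¬ Attacks P c d

/-- A maximal set of pairwise non-attacking cells of `P` (a facet of the rook complex). -/
def IsMaxRookSet (P F : Finset Cell) : Prop :=
  IsRookSet P F ∧ ∀ G, IsRookSet P G → F ⊆ G → G = F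

/-- An interval `I` is embedded if some set `F` of pairwise non-attacking cells,
disjoint from `I`, attacks every cell of `I`. -/
def IsEmbedded (P I : Finset Cell) : Prop :=
  ∃ F : Finset Cell, IsRookSet P F ∧ F ∩ I = ∅ ∧ ∀ c ∈ I, ∃ f ∈ F, Attacks P f c

/-- A partition of `P`: pairwise disjoint maximal cell intervals whose union is `P`. -/
def IsPartition (P : Finset Cell) (A : Finset (Finset Cell)) : Prop :=
  (∀ I ∈ A, IsMaxInterval P I) ∧
  (∀ I ∈ A, ∀ J ∈ A, I ≠ J → Disjoint I J) ∧
  A.biUnion id = P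

/-- A super partition: a partition none of whose intervals is embedded. -/
def IsSuperPartition (P : Finset Cell) (A : Finset (Finset Cell)) : Prop :=
  IsPartition P A ∧ ∀ I ∈ A, ¬ IsEmbedded P I

/-- `P` is a square: a translate of the `n × n` block of cells for some `n ≥ 1`. -/
def IsSquareBlock (P : Finset Cell) : Prop :=
  ∃ a b n : ℤ, 1 ≤ n ∧ P = Finset.Icc a (a + n - 1) ×ˢ Finset.Icc b (b + n - 1)

/-- The graph `G_P` on the cells of `P` whose edges are the attacking pairs. -/
def GP (P : Finset Cell) : SimpleGraph {c : Cell // c ∈ P} where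
  Adj c d := Attacks P (c : Cell) (d : Cell)
  symm := by
    constructor
    rintro c d ⟨hne, I, hI, hc, hd⟩
    exact ⟨hne.symm, I, hI, hd, hc⟩
  loopless := by
    constructor
    rintro c ⟨hne, -⟩
    exact hne rfl

/-- The complement graph `Ḡ_P`. -/
def GBar (P : Finset Cell) : SimpleGraph {c : Cell // c ∈ P} := (GP P)ᶜ

/-- `G` has an induced cycle of length `n`: an injective map from `ZMod n`
whose image induces exactly the cycle adjacencies. -/
def HasInducedCycle {V : Type*} (G : SimpleGraph V) (n : ℕ) : Prop :=
  3 ≤ n ∧ ∃ f : ZMod n → V, Function.Injective f ∧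
    ∀ i j : ZMod n, G.Adj (f i) (f j) ↔ (i = j + 1 ∨ j = i + 1)

/-- A graph is chordal if it has no induced cycle of length at least 4. -/
def IsChordal {V : Type*} (G : SimpleGraph V) : Prop :=
  ∀ n, 4 ≤ n → ¬ HasInducedCycle G n

/-- `P` is simple: any two cells outside `P` are joined by a path of adjacent
cells outside `P`. -/
def IsSimple (P : Finset Cell) : Prop :=
  ∀ c d : Cell, c ∉ P → d ∉ P →
    Relation.ReflTransGen (fun a b => Adjacent a b ∧ a ∉ P ∧ b ∉ P) c d

/-- `P` is thin: it contains no four cells forming a `2 × 2` square. -/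
def IsThin (P : Finset Cell) : Prop :=
  ¬ ∃ a : Cell, ({a, (a.1 + 1, a.2), (a.1, a.2 + 1), (a.1 + 1, a.2 + 1)} : Finset Cell) ⊆ P

/-- A path of distinct cells of `P`, consecutive cells being adjacent. -/
def IsCellPath (P : Finset Cell) (l : List Cell) : Prop :=
  l.Nodup ∧ (∀ c ∈ l, c ∈ P) ∧ l.Chain' Adjacent

/-- The number of changes of direction of a path of cells: positions `k`
(with `1 ≤ k ≤ length - 2`) where the `(k-1)`-st and `(k+1)`-st cells differ
in both coordinates. -/
def dirChanges (l : List Cell) : ℕ :=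
  ((Finset.Ico 1 (l.length - 1)).filter (fun k =>
    (l.getD (k - 1) (0, 0)).1 ≠ (l.getD (k + 1) (0, 0)).1 ∧
    (l.getD (k - 1) (0, 0)).2 ≠ (l.getD (k + 1) (0, 0)).2)).card

/-- The eight rotations/reflections of the grid. -/
def dihedralMaps : List (Cell → Cell) :=
  [fun p => (p.1, p.2), fun p => (-p.2, p.1), fun p => (-p.1, -p.2), fun p => (p.2, -p.1),
   fun p => (p.2, p.1), fun p => (-p.1, p.2), fun p => (-p.2, -p.1), fun p => (p.1, -p.2)]

/-- `P` is obtained from `Q` by a translation, rotation or reflection of `ℤ²`. -/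
def CongruentTo (P Q : Finset Cell) : Prop :=
  ∃ g ∈ dihedralMaps, ∃ t : Cell, P = Q.image (fun p => g p + t)

/-- A brush polyomino with handle `J`. -/
def IsBrush (P J : Finset Cell) : Prop :=
  IsPolyomino P ∧ IsSimple P ∧ IsThin P ∧ IsMaxInterval P J ∧
  (∀ I, IsMaxInterval P I → 2 ≤ I.card → I ≠ J → (I ∩ J).Nonempty) ∧
  (∀ c ∈ P, c ∈ J ∨ ∃ I, IsMaxInterval P I ∧ 2 ≤ I.card ∧ c ∈ I)

/-- A short brush polyomino: a brush all of whose bristles have at most two cells. -/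
def IsShortBrush (P : Finset Cell) : Prop :=
  ∃ J, IsBrush P J ∧ ∀ I, IsMaxInterval P I → I ≠ J → I.card ≤ 2

/-- A pure brush polyomino: handle `J` of cardinality `d` together with `d`
pairwise disjoint bristles `I 0, …, I (d-1)` perpendicular to `J`, each meeting
`J`, whose union is `P`. -/
def IsPureBrush (P J : Finset Cell) (d : ℕ) (I : Fin d → Finset Cell) : Prop :=
  IsPolyomino P ∧ IsSimple P ∧ IsThin P ∧
  J.card = d ∧
  ((IsMaxHInterval P J ∧ ∀ k, IsMaxVInterval P (I k)) ∨
   (IsMaxVInterval P J ∧ ∀ k, IsMaxHInterval P (I k))) ∧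
  (∀ j k, j ≠ k → Disjoint (I j) (I k)) ∧
  (∀ k, ((I k) ∩ J).Nonempty) ∧
  Finset.univ.biUnion I = P

/-- The `k`-th elementary symmetric polynomial of `x 0, …, x (d-1)`. -/
def esymm {R : Type*} [CommRing R] {d : ℕ} (k : ℕ) (x : Fin d → R) : R :=
  ∑ s ∈ Finset.powersetCard k (Finset.univ : Finset (Fin d)), ∏ i ∈ s, x i

/-- `G_P` has an induced matching with `n` edges `{A i, B i}`. -/
def HasInducedMatching (P : Finset Cell) (n : ℕ) : Prop :=
  ∃ A B : Fin n → Cell,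
    (∀ i, Attacks P (A i) (B i)) ∧
    (∀ i j, i ≠ j → A i ≠ A j) ∧
    (∀ i j, i ≠ j → B i ≠ B j) ∧
    (∀ i j, A i ≠ B j) ∧
    (∀ i j, i ≠ j →
      ¬ Attacks P (A i) (A j) ∧ ¬ Attacks P (A i) (B j) ∧ ¬ Attacks P (B i) (B j))

/-- The induced matching number `ν(G_P)`. -/
noncomputable def matchNum (P : Finset Cell) : ℕ := sSup {n | HasInducedMatching P n}

/-- `c` is a single cell of the maximal interval `I`: the maximal interval of `P`
through `c` perpendicular to `I` is `{c}`. -/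
def IsSingleCell (P I : Finset Cell) (c : Cell) : Prop :=
  c ∈ I ∧
  ((IsMaxHInterval P I ∧ ∀ I', IsMaxVInterval P I' → c ∈ I' → I' = {c}) ∨
   (IsMaxVInterval P I ∧ ∀ I', IsMaxHInterval P I' → c ∈ I' → I' = {c}))

section Aux

open Finset

/-! ### Basic facts about segments -/

lemma hseg_mem_iff {S : Finset Cell} {y a b : ℤ} (hS : S = (Finset.Icc a b).image (fun x => (x, y))) {c : Cell} :
    c ∈ S ↔ (a ≤ c.1 ∧ c.1 ≤ b ∧ c.2 = y) := by
  subst hS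
  simp only [Finset.mem_image, Finset.mem_Icc]
  constructor
  · rintro ⟨x, ⟨h1, h2⟩, rfl⟩; exact ⟨h1, h2, rfl⟩
  · rintro ⟨h1, h2, h3⟩; exact ⟨c.1, ⟨h1, h2⟩, by rw [← h3]⟩

lemma vseg_mem_iff {S : Finset Cell} {x a b : ℤ} (hS : S = (Finset.Icc a b).image (fun y => (x, y))) {c : Cell} :
    c ∈ S ↔ (a ≤ c.2 ∧ c.2 ≤ b ∧ c.1 = x) := by
  subst hS
  simp only [Finset.mem_image, Finset.mem_Icc]
  constructor
  · rintro ⟨z, ⟨h1, h2⟩, rfl⟩; exact ⟨h1, h2, rfl⟩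
  · rintro ⟨h1, h2, h3⟩; exact ⟨c.2, ⟨h1, h2⟩, by rw [← h3]⟩

/-- Cells of an H-seg share the y-coordinate. -/
lemma IsHSeg.same_row {S : Finset Cell} (h : IsHSeg S) {c d : Cell} (hc : c ∈ S) (hd : d ∈ S) :
    c.2 = d.2 := by
  obtain ⟨y, a, b, -, hS⟩ := h
  rw [hseg_mem_iff hS] at hc hd
  omega

lemma IsVSeg.same_col {S : Finset Cell} (h : IsVSeg S) {c d : Cell} (hc : c ∈ S) (hd : d ∈ S) :
    c.1 = d.1 := by
  obtain ⟨x, a, b, -, hS⟩ := h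
  rw [vseg_mem_iff hS] at hc hd
  omega

/-- Convexity of horizontal segments. -/
lemma IsHSeg.mem_of_between {S : Finset Cell} (h : IsHSeg S) {c d e : Cell} (hc : c ∈ S) (hd : d ∈ S)
    (hy : e.2 = c.2) (h1 : c.1 ≤ e.1) (h2 : e.1 ≤ d.1) : e ∈ S := by
  obtain ⟨y, a, b, -, hS⟩ := h
  rw [hseg_mem_iff hS] at hc hd ⊢
  omega

lemma IsVSeg.mem_of_between {S : Finset Cell} (h : IsVSeg S) {c d e : Cell} (hc : c ∈ S) (hd : d ∈ S)
    (hy : e.1 = c.1) (h1 : c.2 ≤ e.2) (h2 : e.2 ≤ d.2) : e ∈ S := by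
  obtain ⟨x, a, b, -, hS⟩ := h
  rw [vseg_mem_iff hS] at hc hd ⊢
  omega

lemma IsHSeg.nonempty {S : Finset Cell} (h : IsHSeg S) : S.Nonempty := by
  obtain ⟨y, a, b, hab, hS⟩ := h
  exact ⟨(a, y), by rw [hseg_mem_iff hS]; exact ⟨le_refl _, hab, rfl⟩⟩

lemma IsVSeg.nonempty {S : Finset Cell} (h : IsVSeg S) : S.Nonempty := by
  obtain ⟨x, a, b, hab, hS⟩ := h
  exact ⟨(x, a), by rw [vseg_mem_iff hS]; exact ⟨le_refl _, hab, rfl⟩⟩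

/-- A singleton is an H-seg. -/
lemma isHSeg_singleton (c : Cell) : IsHSeg {c} := by
  refine ⟨c.2, c.1, c.1, le_refl _, ?_⟩
  ext d
  rw [Finset.mem_singleton, hseg_mem_iff rfl]
  constructor
  · rintro rfl; exact ⟨le_refl _, le_refl _, rfl⟩
  · rintro ⟨h1, h2, h3⟩
    have : d.1 = c.1 := le_antisymm h2 h1
    exact Prod.ext this h3

lemma isVSeg_singleton (c : Cell) : IsVSeg {c} := by
  refine ⟨c.1, c.2, c.2, le_refl _, ?_⟩
  ext d
  rw [Finset.mem_singleton, vseg_mem_iff rfl]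
  constructor
  · rintro rfl; exact ⟨le_refl _, le_refl _, rfl⟩
  · rintro ⟨h1, h2, h3⟩
    have : d.2 = c.2 := le_antisymm h2 h1
    exact Prod.ext h3 this

/-- The horizontal segment between two cells in the same row. -/
lemma isHSeg_pairSeg {c d : Cell} (hy : c.2 = d.2) (hx : c.1 ≤ d.1) :
    IsHSeg ((Finset.Icc c.1 d.1).image (fun x => (x, c.2))) :=
  ⟨c.2, c.1, d.1, hx, rfl⟩

lemma isVSeg_pairSeg {c d : Cell} (hx : c.1 = d.1) (hy : c.2 ≤ d.2) :
    IsVSeg ((Finset.Icc c.2 d.2).image (fun y => (c.1, y))) :=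
  ⟨c.1, c.2, d.2, hy, rfl⟩

end Aux
section Aux2
open Finset
open scoped Classical

/-! ### Extension to maximal intervals -/

/-- Every H-seg inside `P` extends to a maximal H-interval. -/
lemma exists_maxH_extend {P S : Finset Cell} (hS : IsHSeg S) (hSP : S ⊆ P) :
    ∃ I, IsMaxHInterval P I ∧ S ⊆ I := by
  classical
  set 𝒮 : Finset (Finset Cell) := P.powerset.filter (fun I => IsHSeg I ∧ S ⊆ I) with h𝒮
  have hmem : ∀ {I}, I ∈ 𝒮 ↔ (I ⊆ P ∧ IsHSeg I ∧ S ⊆ I) := by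
    intro I; simp [h𝒮, Finset.mem_filter, Finset.mem_powerset]
  have hne : 𝒮.Nonempty := ⟨S, hmem.2 ⟨hSP, hS, subset_refl _⟩⟩
  obtain ⟨I, hI, hImax⟩ := 𝒮.exists_max_image Finset.card hne
  rw [hmem] at hI
  refine ⟨I, ⟨hI.2.1, hI.1, ?_⟩, hI.2.2⟩
  intro I' hI'seg hI'P hII'
  have hI'mem : I' ∈ 𝒮 := hmem.2 ⟨hI'P, hI'seg, hI.2.2.trans hII'⟩
  exact (Finset.eq_of_subset_of_card_le hII' (hImax I' hI'mem)).symm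

lemma exists_maxV_extend {P S : Finset Cell} (hS : IsVSeg S) (hSP : S ⊆ P) :
    ∃ I, IsMaxVInterval P I ∧ S ⊆ I := by
  classical
  set 𝒮 : Finset (Finset Cell) := P.powerset.filter (fun I => IsVSeg I ∧ S ⊆ I) with h𝒮
  have hmem : ∀ {I}, I ∈ 𝒮 ↔ (I ⊆ P ∧ IsVSeg I ∧ S ⊆ I) := by
    intro I; simp [h𝒮, Finset.mem_filter, Finset.mem_powerset]
  have hne : 𝒮.Nonempty := ⟨S, hmem.2 ⟨hSP, hS, subset_refl _⟩⟩
  obtain ⟨I, hI, hImax⟩ := 𝒮.exists_max_image Finset.card hne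
  rw [hmem] at hI
  refine ⟨I, ⟨hI.2.1, hI.1, ?_⟩, hI.2.2⟩
  intro I' hI'seg hI'P hII'
  have hI'mem : I' ∈ 𝒮 := hmem.2 ⟨hI'P, hI'seg, hI.2.2.trans hII'⟩
  exact (Finset.eq_of_subset_of_card_le hII' (hImax I' hI'mem)).symm

/-- Every cell of `P` lies in some maximal H-interval. -/
lemma exists_maxH_mem {P : Finset Cell} {c : Cell} (hc : c ∈ P) :
    ∃ I, IsMaxHInterval P I ∧ c ∈ I := by
  obtain ⟨I, hI, hsub⟩ := exists_maxH_extend (isHSeg_singleton c)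
    (by intro d hd; rw [Finset.mem_singleton] at hd; subst hd; exact hc)
  exact ⟨I, hI, hsub (Finset.mem_singleton_self c)⟩

lemma exists_maxV_mem {P : Finset Cell} {c : Cell} (hc : c ∈ P) :
    ∃ I, IsMaxVInterval P I ∧ c ∈ I := by
  obtain ⟨I, hI, hsub⟩ := exists_maxV_extend (isVSeg_singleton c)
    (by intro d hd; rw [Finset.mem_singleton] at hd; subst hd; exact hc)
  exact ⟨I, hI, hsub (Finset.mem_singleton_self c)⟩

/-- Two maximal H-intervals sharing a cell are equal. -/
lemma maxH_unique {P I₁ I₂ : Finset Cell} (h1 : IsMaxHInterval P I₁) (h2 : IsMaxHInterval P I₂)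
    {c : Cell} (hc1 : c ∈ I₁) (hc2 : c ∈ I₂) : I₁ = I₂ := by
  obtain ⟨⟨y1, a1, b1, hab1, hS1⟩, hP1, hmax1⟩ := h1
  obtain ⟨⟨y2, a2, b2, hab2, hS2⟩, hP2, hmax2⟩ := h2
  have hc1' := (hseg_mem_iff hS1).1 hc1
  have hc2' := (hseg_mem_iff hS2).1 hc2
  have hy : y1 = y2 := by omega
  subst hy
  -- the union is an H-seg
  set U : Finset Cell := (Finset.Icc (min a1 a2) (max b1 b2)).image (fun x => (x, y1)) with hU
  have hUseg : IsHSeg U := ⟨y1, _, _, by omega, rfl⟩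
  have hmemU : ∀ {d : Cell}, d ∈ U ↔ (min a1 a2 ≤ d.1 ∧ d.1 ≤ max b1 b2 ∧ d.2 = y1) :=
    fun {d} => hseg_mem_iff hU
  have hUP : U ⊆ P := by
    intro d hd
    rw [hmemU] at hd
    rcases le_or_gt d.1 b1 with h | h
    · rcases le_or_gt a1 d.1 with h' | h'
      · exact hP1 ((hseg_mem_iff hS1).2 ⟨h', h, hd.2.2⟩)
      · exact hP2 ((hseg_mem_iff hS2).2 ⟨by omega, by omega, hd.2.2⟩)
    · exact hP2 ((hseg_mem_iff hS2).2 ⟨by omega, by omega, hd.2.2⟩)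
  have hs1 : I₁ ⊆ U := by
    intro d hd; rw [hseg_mem_iff hS1] at hd; rw [hmemU]; omega
  have hs2 : I₂ ⊆ U := by
    intro d hd; rw [hseg_mem_iff hS2] at hd; rw [hmemU]; omega
  rw [← hmax1 U hUseg hUP hs1, ← hmax2 U hUseg hUP hs2]

lemma maxV_unique {P I₁ I₂ : Finset Cell} (h1 : IsMaxVInterval P I₁) (h2 : IsMaxVInterval P I₂)
    {c : Cell} (hc1 : c ∈ I₁) (hc2 : c ∈ I₂) : I₁ = I₂ := by
  obtain ⟨⟨x1, a1, b1, hab1, hS1⟩, hP1, hmax1⟩ := h1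
  obtain ⟨⟨x2, a2, b2, hab2, hS2⟩, hP2, hmax2⟩ := h2
  have hc1' := (vseg_mem_iff hS1).1 hc1
  have hc2' := (vseg_mem_iff hS2).1 hc2
  have hx : x1 = x2 := by omega
  subst hx
  set U : Finset Cell := (Finset.Icc (min a1 a2) (max b1 b2)).image (fun y => (x1, y)) with hU
  have hUseg : IsVSeg U := ⟨x1, _, _, by omega, rfl⟩
  have hmemU : ∀ {d : Cell}, d ∈ U ↔ (min a1 a2 ≤ d.2 ∧ d.2 ≤ max b1 b2 ∧ d.1 = x1) :=
    fun {d} => vseg_mem_iff hU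
  have hUP : U ⊆ P := by
    intro d hd
    rw [hmemU] at hd
    rcases le_or_gt d.2 b1 with h | h
    · rcases le_or_gt a1 d.2 with h' | h'
      · exact hP1 ((vseg_mem_iff hS1).2 ⟨h', h, hd.2.2⟩)
      · exact hP2 ((vseg_mem_iff hS2).2 ⟨by omega, by omega, hd.2.2⟩)
    · exact hP2 ((vseg_mem_iff hS2).2 ⟨by omega, by omega, hd.2.2⟩)
  have hs1 : I₁ ⊆ U := by
    intro d hd; rw [vseg_mem_iff hS1] at hd; rw [hmemU]; omega
  have hs2 : I₂ ⊆ U := by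
    intro d hd; rw [vseg_mem_iff hS2] at hd; rw [hmemU]; omega
  rw [← hmax1 U hUseg hUP hs1, ← hmax2 U hUseg hUP hs2]

end Aux2
section Aux3
open Finset

/-! ### Attacks -/

lemma Attacks.mem_left {P : Finset Cell} {c d : Cell} (h : Attacks P c d) : c ∈ P := by
  obtain ⟨-, I, hI, hc, -⟩ := h
  rcases hI with hI | hI
  · exact hI.2.1 hc
  · exact hI.2.1 hc

lemma Attacks.mem_right {P : Finset Cell} {c d : Cell} (h : Attacks P c d) : d ∈ P := by
  obtain ⟨-, I, hI, -, hd⟩ := h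
  rcases hI with hI | hI
  · exact hI.2.1 hd
  · exact hI.2.1 hd

lemma Attacks.symm {P : Finset Cell} {c d : Cell} (h : Attacks P c d) : Attacks P d c := by
  obtain ⟨hne, I, hI, hc, hd⟩ := h
  exact ⟨hne.symm, I, hI, hd, hc⟩

/-- An attack happens along a common maximal H-interval (same row) or a common
maximal V-interval (same column). -/
lemma Attacks.cases {P : Finset Cell} {c d : Cell} (h : Attacks P c d) :
    (∃ I, IsMaxHInterval P I ∧ c ∈ I ∧ d ∈ I ∧ c.2 = d.2) ∨
    (∃ I, IsMaxVInterval P I ∧ c ∈ I ∧ d ∈ I ∧ c.1 = d.1) := by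
  obtain ⟨hne, I, hI, hc, hd⟩ := h
  rcases hI with hI | hI
  · exact Or.inl ⟨I, hI, hc, hd, hI.1.same_row hc hd⟩
  · exact Or.inr ⟨I, hI, hc, hd, hI.1.same_col hc hd⟩

/-- Cells in a common H-seg inside `P` attack each other. -/
lemma attacks_of_hseg {P S : Finset Cell} (hS : IsHSeg S) (hSP : S ⊆ P) {c d : Cell}
    (hc : c ∈ S) (hd : d ∈ S) (hne : c ≠ d) : Attacks P c d := by
  obtain ⟨I, hI, hsub⟩ := exists_maxH_extend hS hSP
  exact ⟨hne, I, Or.inl hI, hsub hc, hsub hd⟩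

lemma attacks_of_vseg {P S : Finset Cell} (hS : IsVSeg S) (hSP : S ⊆ P) {c d : Cell}
    (hc : c ∈ S) (hd : d ∈ S) (hne : c ≠ d) : Attacks P c d := by
  obtain ⟨I, hI, hsub⟩ := exists_maxV_extend hS hSP
  exact ⟨hne, I, Or.inr hI, hsub hc, hsub hd⟩

/-- Cells in different rows and different columns never attack. -/
lemma not_attacks_of_diag {P : Finset Cell} {c d : Cell} (h1 : c.1 ≠ d.1) (h2 : c.2 ≠ d.2) :
    ¬ Attacks P c d := by
  intro h
  rcases h.cases with ⟨I, -, -, -, h⟩ | ⟨I, -, -, -, h⟩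
  · exact h2 h
  · exact h1 h

/-- A cell belongs to both an H-seg and a V-seg in at most one cell of each other. -/
lemma eq_of_mem_hseg_vseg {S T : Finset Cell} (hS : IsHSeg S) (hT : IsVSeg T) {c d : Cell}
    (hcS : c ∈ S) (hdS : d ∈ S) (hcT : c ∈ T) (hdT : d ∈ T) : c = d := by
  have h1 := hS.same_row hcS hdS
  have h2 := hT.same_col hcT hdT
  exact Prod.ext h2 h1

/-- Cardinality of an H-seg. -/
lemma IsHSeg.exists_rep_card {S : Finset Cell} (h : IsHSeg S) :
    ∃ y a b : ℤ, a ≤ b ∧ S = (Finset.Icc a b).image (fun x => (x, y)) ∧ S.card = (b - a + 1).toNat := by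
  obtain ⟨y, a, b, hab, hS⟩ := h
  refine ⟨y, a, b, hab, hS, ?_⟩
  have hinj : Function.Injective (fun x : ℤ => ((x, y) : Cell)) := by
    intro x1 x2 h; exact congrArg Prod.fst h
  rw [hS, Finset.card_image_of_injective _ hinj, Int.card_Icc]
  omega

lemma IsVSeg.exists_rep_card {S : Finset Cell} (h : IsVSeg S) :
    ∃ x a b : ℤ, a ≤ b ∧ S = (Finset.Icc a b).image (fun y => (x, y)) ∧ S.card = (b - a + 1).toNat := by
  obtain ⟨x, a, b, hab, hS⟩ := h
  refine ⟨x, a, b, hab, hS, ?_⟩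
  have hinj : Function.Injective (fun z : ℤ => ((x, z) : Cell)) := by
    intro x1 x2 h; exact congrArg Prod.snd h
  rw [hS, Finset.card_image_of_injective _ hinj, Int.card_Icc]
  omega

/-- A segment of card ≥ 2 cannot be both an H-seg and a V-seg. -/
lemma not_hseg_vseg_of_two {S : Finset Cell} (hS : IsHSeg S) (hT : IsVSeg S) (h2 : 2 ≤ S.card) :
    False := by
  obtain ⟨c, d, hc, hd, hne⟩ := Finset.one_lt_card_iff.1 h2
  exact hne (eq_of_mem_hseg_vseg hS hT hc hd hc hd)

end Aux3
section Aux4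
open Finset

/-- In a polyomino with at least two cells, every cell has a neighbor. -/
lemma exists_adjacent {P : Finset Cell} (hP : IsPolyomino P) (h2 : 2 ≤ P.card) {c : Cell}
    (hc : c ∈ P) : ∃ d ∈ P, Adjacent c d := by
  obtain ⟨c', d', hc', hd', hne⟩ := Finset.one_lt_card_iff.1 h2
  have hd : ∃ d ∈ P, d ≠ c := by
    rcases eq_or_ne c' c with rfl | h
    · exact ⟨d', hd', hne.symm⟩
    · exact ⟨c', hc', h⟩
  obtain ⟨d, hdP, hdc⟩ := hd
  have := hP.2 c hc d hdP
  rw [Relation.reflTransGen_iff_eq_or_transGen] at this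
  rcases this with rfl | htg
  · exact absurd rfl hdc
  · obtain ⟨e, he, -⟩ := Relation.TransGen.head'_iff.1 htg
    exact ⟨e, he.2.2, he.1⟩

/-- Adjacent cells of `P` lie in a common maximal interval of card ≥ 2, containing `c`. -/
lemma exists_interval_two {P : Finset Cell} {c d : Cell} (hc : c ∈ P) (hd : d ∈ P)
    (hadj : Adjacent c d) : ∃ I, IsMaxInterval P I ∧ 2 ≤ I.card ∧ c ∈ I ∧ d ∈ I := by
  have hne : c ≠ d := by
    intro h; subst h
    rcases hadj with ⟨-, h⟩ | ⟨-, h⟩ <;> omega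
  rcases hadj with ⟨h1, h2⟩ | ⟨h1, h2⟩
  · -- vertical neighbors
    have hS : ∃ S, IsVSeg S ∧ S ⊆ P ∧ c ∈ S ∧ d ∈ S := by
      rcases h2 with h2 | h2
      · refine ⟨(Finset.Icc d.2 c.2).image (fun y => (d.1, y)), ⟨d.1, d.2, c.2, by omega, rfl⟩, ?_, ?_, ?_⟩
        · intro e he
          rw [vseg_mem_iff rfl] at he
          have : e = c ∨ e = d := by
            rcases eq_or_lt_of_le he.1 with h | h
            · right; exact Prod.ext he.2.2 h.symm
            · left; exact Prod.ext (by omega) (by omega)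
          rcases this with rfl | rfl <;> assumption
        · rw [vseg_mem_iff rfl]; omega
        · rw [vseg_mem_iff rfl]; omega
      · refine ⟨(Finset.Icc c.2 d.2).image (fun y => (c.1, y)), ⟨c.1, c.2, d.2, by omega, rfl⟩, ?_, ?_, ?_⟩
        · intro e he
          rw [vseg_mem_iff rfl] at he
          have : e = c ∨ e = d := by
            rcases eq_or_lt_of_le he.1 with h | h
            · left; exact Prod.ext he.2.2 h.symm
            · right; exact Prod.ext (by omega) (by omega)
          rcases this with rfl | rfl <;> assumption
        · rw [vseg_mem_iff rfl]; omega
        · rw [vseg_mem_iff rfl]; omega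
    obtain ⟨S, hSseg, hSP, hcS, hdS⟩ := hS
    obtain ⟨I, hI, hsub⟩ := exists_maxV_extend hSseg hSP
    exact ⟨I, Or.inr hI, Finset.one_lt_card_iff.2 ⟨c, d, hsub hcS, hsub hdS, hne⟩,
      hsub hcS, hsub hdS⟩
  · -- horizontal neighbors
    have hS : ∃ S, IsHSeg S ∧ S ⊆ P ∧ c ∈ S ∧ d ∈ S := by
      rcases h2 with h2 | h2
      · refine ⟨(Finset.Icc d.1 c.1).image (fun x => (x, d.2)), ⟨d.2, d.1, c.1, by omega, rfl⟩, ?_, ?_, ?_⟩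
        · intro e he
          rw [hseg_mem_iff rfl] at he
          have : e = c ∨ e = d := by
            rcases eq_or_lt_of_le he.1 with h | h
            · right; exact Prod.ext h.symm he.2.2
            · left; exact Prod.ext (by omega) (by omega)
          rcases this with rfl | rfl <;> assumption
        · rw [hseg_mem_iff rfl]; omega
        · rw [hseg_mem_iff rfl]; omega
      · refine ⟨(Finset.Icc c.1 d.1).image (fun x => (x, c.2)), ⟨c.2, c.1, d.1, by omega, rfl⟩, ?_, ?_, ?_⟩
        · intro e he
          rw [hseg_mem_iff rfl] at he
          have : e = c ∨ e = d := by
            rcases eq_or_lt_of_le he.1 with h | h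
            · left; exact Prod.ext h.symm he.2.2
            · right; exact Prod.ext (by omega) (by omega)
          rcases this with rfl | rfl <;> assumption
        · rw [hseg_mem_iff rfl]; omega
        · rw [hseg_mem_iff rfl]; omega
    obtain ⟨S, hSseg, hSP, hcS, hdS⟩ := hS
    obtain ⟨I, hI, hsub⟩ := exists_maxH_extend hSseg hSP
    exact ⟨I, Or.inl hI, Finset.one_lt_card_iff.2 ⟨c, d, hsub hcS, hsub hdS, hne⟩,
      hsub hcS, hsub hdS⟩

/-- Every cell of a polyomino with ≥ 2 cells lies in a maximal interval of card ≥ 2. -/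
lemma mem_big_interval {P : Finset Cell} (hP : IsPolyomino P) (h2 : 2 ≤ P.card) {c : Cell}
    (hc : c ∈ P) : ∃ I, IsMaxInterval P I ∧ 2 ≤ I.card ∧ c ∈ I := by
  obtain ⟨d, hd, hadj⟩ := exists_adjacent hP h2 hc
  obtain ⟨I, h1, h2, h3, -⟩ := exists_interval_two hc hd hadj
  exact ⟨I, h1, h2, h3⟩

end Aux4
section Aux5
open Finset

/-- No rectangle (with both sides ≥ 2) can have its full boundary inside a
simple thin polyomino. -/
lemma no_rectangle {P : Finset Cell} (hs : IsSimple P) (ht : IsThin P)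
    {x1 x2 y1 y2 : ℤ} (hx : x1 < x2) (hy : y1 < y2)
    (hbd : ∀ p : Cell, (((p.1 = x1 ∨ p.1 = x2) ∧ y1 ≤ p.2 ∧ p.2 ≤ y2) ∨
      ((p.2 = y1 ∨ p.2 = y2) ∧ x1 ≤ p.1 ∧ p.1 ≤ x2)) → p ∈ P) : False := by
  by_cases hint : ∀ p : Cell, x1 < p.1 → p.1 < x2 → y1 < p.2 → p.2 < y2 → p ∈ P
  · -- all interior cells in P: find a 2×2 square
    apply ht
    refine ⟨(x1, y1), ?_⟩
    intro p hp
    have hmem : ∀ q : Cell, (x1 ≤ q.1 ∧ q.1 ≤ x1 + 1 ∧ y1 ≤ q.2 ∧ q.2 ≤ y1 + 1) → q ∈ P := by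
      intro q ⟨h1, h2, h3, h4⟩
      rcases eq_or_lt_of_le h1 with h1' | h1'
      · exact hbd q (Or.inl ⟨Or.inl h1'.symm, by omega, by omega⟩)
      · rcases le_or_gt x2 q.1 with h2' | h2'
        · exact hbd q (Or.inl ⟨Or.inr (by omega), by omega, by omega⟩)
        · rcases eq_or_lt_of_le h3 with h3' | h3'
          · exact hbd q (Or.inr ⟨Or.inl h3'.symm, by omega, by omega⟩)
          · rcases le_or_gt y2 q.2 with h4' | h4'
            · exact hbd q (Or.inr ⟨Or.inr (by omega), by omega, by omega⟩)
            · exact hint q h1' h2' h3' h4'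
    simp only [Finset.mem_insert, Finset.mem_singleton] at hp
    rcases hp with rfl | rfl | rfl | rfl <;> exact hmem _ (by dsimp only; omega)
  · push_neg at hint
    obtain ⟨q, hq1, hq2, hq3, hq4, hqP⟩ := hint
    -- find a far-away cell not in P
    have hPne : ((x1, y1) : Cell) ∈ P := hbd _ (Or.inl ⟨Or.inl rfl, by omega, by omega⟩)
    set X : ℤ := ((P.image Prod.fst).max' ⟨x1, Finset.mem_image_of_mem _ hPne⟩) with hX
    have hXle : ∀ p ∈ P, p.1 ≤ X := fun p hp =>
      Finset.le_max' _ _ (Finset.mem_image_of_mem _ hp)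
    have hdP : ((X + 1, y1) : Cell) ∉ P := fun h => by have := hXle _ h; omega
    have hchain := hs q (X + 1, y1) hqP hdP
    -- every cell reachable from q outside P stays strictly inside the rectangle
    have hinv : ∀ e : Cell, Relation.ReflTransGen
        (fun a b => Adjacent a b ∧ a ∉ P ∧ b ∉ P) q e →
        x1 < e.1 ∧ e.1 < x2 ∧ y1 < e.2 ∧ e.2 < y2 := by
      intro e he
      induction he with
      | refl => exact ⟨hq1, hq2, hq3, hq4⟩
      | @tail b c hab hstep ih =>
        obtain ⟨hadj, -, hcP⟩ := hstep
        -- c is a unit step from b which is strictly inside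
        have hclose : (c.1 = b.1 ∧ (c.2 = b.2 + 1 ∨ c.2 = b.2 - 1)) ∨
            (c.2 = b.2 ∧ (c.1 = b.1 + 1 ∨ c.1 = b.1 - 1)) := by
          rcases hadj with ⟨h1, h2⟩ | ⟨h1, h2⟩
          · left; omega
          · right; omega
        have hin : x1 ≤ c.1 ∧ c.1 ≤ x2 ∧ y1 ≤ c.2 ∧ c.2 ≤ y2 := by
          rcases hclose with ⟨h1, h2⟩ | ⟨h1, h2⟩ <;> omega
        -- if c were on the boundary it would be in P
        by_contra hcon
        apply hcP
        apply hbd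
        rcases le_or_gt c.1 x1 with h | h
        · exact Or.inl ⟨Or.inl (by omega), by omega, by omega⟩
        · rcases le_or_gt x2 c.1 with h' | h'
          · exact Or.inl ⟨Or.inr (by omega), by omega, by omega⟩
          · rcases le_or_gt c.2 y1 with h'' | h''
            · exact Or.inr ⟨Or.inl (by omega), by omega, by omega⟩
            · rcases le_or_gt y2 c.2 with h''' | h'''
              · exact Or.inr ⟨Or.inr (by omega), by omega, by omega⟩
              · exact absurd ⟨h, h', h'', h'''⟩ hcon
    have := hinv _ hchain
    simp only at this
    have h1 : x2 ≤ X := by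
      have := hXle _ (hbd (x2, y1) (Or.inl ⟨Or.inr rfl, by omega, by omega⟩))
      simpa using this
    omega

end Aux5
section Aux6
open Finset

/-- Two attacking pairs with no cross attacks: an induced `2K₂` in `G_P`. -/
def Config2K2 (P : Finset Cell) : Prop :=
  ∃ a b c d : Cell, Attacks P a b ∧ Attacks P c d ∧
    a ≠ c ∧ a ≠ d ∧ b ≠ c ∧ b ≠ d ∧
    ¬ Attacks P a c ∧ ¬ Attacks P a d ∧ ¬ Attacks P b c ∧ ¬ Attacks P b d

lemma Config2K2.not_chordal {P : Finset Cell} (h : Config2K2 P) : ¬ IsChordal (GBar P) := by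
  obtain ⟨a, b, c, d, hab, hcd, hac, had, hbc, hbd, nac, nad, nbc, nbd⟩ := h
  have hba := hab.symm
  have hdc := hcd.symm
  have hca := hac.symm
  have hda := had.symm
  have hcb := hbc.symm
  have hdb := hbd.symm
  have nca : ¬ Attacks P c a := fun h => nac h.symm
  have nda : ¬ Attacks P d a := fun h => nad h.symm
  have ncb : ¬ Attacks P c b := fun h => nbc h.symm
  have ndb : ¬ Attacks P d b := fun h => nbd h.symm
  have hab' := hab.1
  have hba' := hab.1.symm
  have hcd' := hcd.1
  have hdc' := hcd.1.symm
  intro hch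
  apply hch 4 (le_refl 4)
  refine ⟨by omega, ?_⟩
  have haP := hab.mem_left
  have hbP := hab.mem_right
  have hcP := hcd.mem_left
  have hdP := hcd.mem_right
  have hcase : ∀ k : ZMod 4, k = 0 ∨ k = 1 ∨ k = 2 ∨ k = 3 := by decide
  refine ⟨(![⟨a, haP⟩, ⟨c, hcP⟩, ⟨b, hbP⟩, ⟨d, hdP⟩] : ZMod 4 → {x : Cell // x ∈ P}), ?_, ?_⟩
  all_goals
    have e0 : (![⟨a, haP⟩, ⟨c, hcP⟩, ⟨b, hbP⟩, ⟨d, hdP⟩] : ZMod 4 → {x : Cell // x ∈ P}) 0 = ⟨a, haP⟩ := rfl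
    have e1 : (![⟨a, haP⟩, ⟨c, hcP⟩, ⟨b, hbP⟩, ⟨d, hdP⟩] : ZMod 4 → {x : Cell // x ∈ P}) 1 = ⟨c, hcP⟩ := rfl
    have e2 : (![⟨a, haP⟩, ⟨c, hcP⟩, ⟨b, hbP⟩, ⟨d, hdP⟩] : ZMod 4 → {x : Cell // x ∈ P}) 2 = ⟨b, hbP⟩ := rfl
    have e3 : (![⟨a, haP⟩, ⟨c, hcP⟩, ⟨b, hbP⟩, ⟨d, hdP⟩] : ZMod 4 → {x : Cell // x ∈ P}) 3 = ⟨d, hdP⟩ := rfl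
  · -- injectivity
    intro i j hij
    rcases hcase i with rfl | rfl | rfl | rfl <;> rcases hcase j with rfl | rfl | rfl | rfl <;>
      simp only [e0, e1, e2, e3] at hij <;>
      first
        | rfl
        | (exact absurd (congrArg Subtype.val hij) (by assumption))
  · -- adjacency
    intro i j
    have hadj : ∀ u v : {x : Cell // x ∈ P}, (GBar P).Adj u v ↔
        ((u : Cell) ≠ (v : Cell) ∧ ¬ Attacks P (u : Cell) (v : Cell)) := by
      intro u v
      constructor
      · rintro ⟨h1, h2⟩
        exact ⟨fun he => h1 (Subtype.ext he), h2⟩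
      · rintro ⟨h1, h2⟩
        exact ⟨fun he => h1 (congrArg Subtype.val he), h2⟩
    rcases hcase i with rfl | rfl | rfl | rfl <;> rcases hcase j with rfl | rfl | rfl | rfl <;>
      simp only [e0, e1, e2, e3] <;> rw [hadj] <;>
      first
        | exact iff_of_true ⟨by assumption, by assumption⟩ (by decide)
        | exact iff_of_false (fun h => h.1 rfl) (by decide)
        | exact iff_of_false (fun h => h.2 (by assumption)) (by decide)

end Aux6
section Aux7
open Finset

/-- No cross attack between a cell of a maximal H-interval and a cell of a maximal
V-interval, when neither belongs to the other interval. -/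
lemma no_cross_perp {P A B : Finset Cell} (hA : IsMaxHInterval P A) (hB : IsMaxVInterval P B)
    {a c : Cell} (haA : a ∈ A) (haB : a ∉ B) (hcB : c ∈ B) (hcA : c ∉ A) :
    ¬ Attacks P a c := by
  intro h
  rcases h.cases with ⟨I, hI, haI, hcI, -⟩ | ⟨I, hI, haI, hcI, -⟩
  · exact hcA (maxH_unique hI hA haI haA ▸ hcI)
  · exact haB (maxV_unique hI hB hcI hcB ▸ haI)

/-- Perpendicular maximal intervals with two cells outside each other give a 2K2. -/
lemma perp_config {P A B : Finset Cell} (hA : IsMaxHInterval P A) (hB : IsMaxVInterval P B)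
    {a b c d : Cell} (haA : a ∈ A) (hbA : b ∈ A) (hcB : c ∈ B) (hdB : d ∈ B)
    (haB : a ∉ B) (hbB : b ∉ B) (hcA : c ∉ A) (hdA : d ∉ A)
    (hab : a ≠ b) (hcd : c ≠ d) : Config2K2 P := by
  refine ⟨a, b, c, d, attacks_of_hseg hA.1 hA.2.1 haA hbA hab,
    attacks_of_vseg hB.1 hB.2.1 hcB hdB hcd, ?_, ?_, ?_, ?_, ?_, ?_, ?_, ?_⟩
  · rintro rfl; exact haB hcB
  · rintro rfl; exact haB hdB
  · rintro rfl; exact hbB hcB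
  · rintro rfl; exact hbB hdB
  · exact no_cross_perp hA hB haA haB hcB hcA
  · exact no_cross_perp hA hB haA haB hdB hdA
  · exact no_cross_perp hA hB hbA hbB hcB hcA
  · exact no_cross_perp hA hB hbA hbB hdB hdA

/-- Key consequence for perpendicular pairs of big intervals. -/
lemma perp_structure {P A B : Finset Cell} (hcfg : ¬ Config2K2 P)
    (hA : IsMaxHInterval P A) (hB : IsMaxVInterval P B)
    (hA2 : 2 ≤ A.card) (hB2 : 2 ≤ B.card) :
    (A ∩ B).Nonempty ∧ (A.card = 2 ∨ B.card = 2) := by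
  classical
  have hint : (A ∩ B).card ≤ 1 := by
    refine Finset.card_le_one.2 ?_
    intro c hc d hd
    rw [Finset.mem_inter] at hc hd
    exact eq_of_mem_hseg_vseg hA.1 hB.1 hc.1 hd.1 hc.2 hd.2
  have hsplitA : (A \ B).card + (A ∩ B).card = A.card := Finset.card_sdiff_add_card_inter A B
  have hsplitB : (B \ A).card + (B ∩ A).card = B.card := Finset.card_sdiff_add_card_inter B A
  have hintBA : (B ∩ A).card ≤ 1 := by
    rw [Finset.inter_comm]; exact hint
  have hkey : (A \ B).card ≤ 1 ∨ (B \ A).card ≤ 1 := by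
    by_contra hcon
    push_neg at hcon
    obtain ⟨h1, h2⟩ := hcon
    obtain ⟨a, b, ha, hb, hab⟩ := Finset.one_lt_card_iff.1 h1
    obtain ⟨c, d, hc, hd, hcd⟩ := Finset.one_lt_card_iff.1 h2
    rw [Finset.mem_sdiff] at ha hb hc hd
    exact hcfg (perp_config hA hB ha.1 hb.1 hc.1 hd.1 ha.2 hb.2 hc.2 hd.2 hab hcd)
  have hcomm : (A ∩ B).card = (B ∩ A).card := by rw [Finset.inter_comm]
  constructor
  · rw [← Finset.card_pos]
    omega
  · omega

end Aux7
section Aux8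
open Finset

lemma IsHSeg.mem_of_between' {S : Finset Cell} (h : IsHSeg S) {c d e : Cell} (hc : c ∈ S)
    (hd : d ∈ S) (hy : e.2 = c.2) (h1 : min c.1 d.1 ≤ e.1) (h2 : e.1 ≤ max c.1 d.1) : e ∈ S := by
  rcases le_total c.1 d.1 with hcd | hcd
  · exact h.mem_of_between hc hd hy (by omega) (by omega)
  · exact h.mem_of_between hd hc (by rw [hy]; exact (h.same_row hc hd)) (by omega) (by omega)

lemma IsVSeg.mem_of_between' {S : Finset Cell} (h : IsVSeg S) {c d e : Cell} (hc : c ∈ S)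
    (hd : d ∈ S) (hx : e.1 = c.1) (h1 : min c.2 d.2 ≤ e.2) (h2 : e.2 ≤ max c.2 d.2) : e ∈ S := by
  rcases le_total c.2 d.2 with hcd | hcd
  · exact h.mem_of_between hc hd hx (by omega) (by omega)
  · exact h.mem_of_between hd hc (by rw [hx]; exact (h.same_col hc hd)) (by omega) (by omega)

/-- Between two distinct parallel maximal H-intervals there cannot be two links
in different columns. -/
lemma parallelH_two_links {P A B : Finset Cell} (hs : IsSimple P) (ht : IsThin P)
    (hA : IsMaxHInterval P A) (hB : IsMaxHInterval P B) (hAB : A ≠ B)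
    {u v u' v' : Cell} (hu : u ∈ A) (hv : v ∈ B) (hu' : u' ∈ A) (hv' : v' ∈ B)
    (l1 : Attacks P u v) (l2 : Attacks P u' v') (hlt : u.1 < u'.1) : False := by
  have hI : ∃ I, IsMaxVInterval P I ∧ u ∈ I ∧ v ∈ I ∧ u.1 = v.1 := by
    rcases l1.cases with ⟨I, hI, huI, hvI, -⟩ | ⟨I, hI, huI, hvI, hcol⟩
    · exact absurd (maxH_unique hA hB ((maxH_unique hI hA huI hu) ▸ hvI) hv) hAB
    · exact ⟨I, hI, huI, hvI, hcol⟩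
  have hI' : ∃ I, IsMaxVInterval P I ∧ u' ∈ I ∧ v' ∈ I ∧ u'.1 = v'.1 := by
    rcases l2.cases with ⟨I, hI, huI, hvI, -⟩ | ⟨I, hI, huI, hvI, hcol⟩
    · exact absurd (maxH_unique hA hB ((maxH_unique hI hA huI hu') ▸ hvI) hv') hAB
    · exact ⟨I, hI, huI, hvI, hcol⟩
  obtain ⟨I, hIm, huI, hvI, hcol⟩ := hI
  obtain ⟨I', hI'm, huI', hvI', hcol'⟩ := hI'
  have hrowA : u.2 = u'.2 := hA.1.same_row hu hu'
  have hrowB : v.2 = v'.2 := hB.1.same_row hv hv'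
  have hne : u.2 ≠ v.2 := by
    intro h
    exact l1.1 (Prod.ext hcol h)
  apply no_rectangle hs ht hlt (show min u.2 v.2 < max u.2 v.2 by omega)
  intro p hp
  rcases hp with ⟨hp1 | hp1, hp2, hp3⟩ | ⟨hp1 | hp1, hp2, hp3⟩
  · exact hIm.2.1 (hIm.1.mem_of_between' huI hvI (by omega) (by omega) (by omega))
  · refine hI'm.2.1 (hI'm.1.mem_of_between' huI' hvI' (by omega) (by omega) (by omega))
  · -- bottom row
    rcases le_total u.2 v.2 with hc | hc
    · exact hA.2.1 (hA.1.mem_of_between' hu hu' (by omega) (by omega) (by omega))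
    · exact hB.2.1 (hB.1.mem_of_between' hv hv' (by omega) (by omega) (by omega))
  · -- top row
    rcases le_total u.2 v.2 with hc | hc
    · exact hB.2.1 (hB.1.mem_of_between' hv hv' (by omega) (by omega) (by omega))
    · exact hA.2.1 (hA.1.mem_of_between' hu hu' (by omega) (by omega) (by omega))

/-- Structure of a pair of distinct parallel maximal H-intervals of card ≥ 2 when
there is no 2K2 configuration. -/
lemma parallelH_structure {P A B : Finset Cell} (hs : IsSimple P) (ht : IsThin P)
    (hcfg : ¬ Config2K2 P) (hA : IsMaxHInterval P A) (hB : IsMaxHInterval P B) (hAB : A ≠ B)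
    (hA2 : 2 ≤ A.card) (hB2 : 2 ≤ B.card) :
    A.card = 2 ∧ B.card = 2 ∧ ∃ u v, u ∈ A ∧ v ∈ B ∧ Attacks P u v := by
  classical
  have hdisj : ∀ x, x ∈ A → x ∉ B := fun x hxA hxB => hAB (maxH_unique hA hB hxA hxB)
  -- a link exists
  have hlink : ∃ u v, u ∈ A ∧ v ∈ B ∧ Attacks P u v := by
    by_contra hno
    push_neg at hno
    obtain ⟨a, b, haA, hbA, hab⟩ := Finset.one_lt_card_iff.1 hA2
    obtain ⟨c, d, hcB, hdB, hcd⟩ := Finset.one_lt_card_iff.1 hB2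
    refine hcfg ⟨a, b, c, d, attacks_of_hseg hA.1 hA.2.1 haA hbA hab,
      attacks_of_hseg hB.1 hB.2.1 hcB hdB hcd, ?_, ?_, ?_, ?_,
      hno a c haA hcB, hno a d haA hdB, hno b c hbA hcB, hno b d hbA hdB⟩
    · rintro rfl; exact hdisj a haA hcB
    · rintro rfl; exact hdisj a haA hdB
    · rintro rfl; exact hdisj b hbA hcB
    · rintro rfl; exact hdisj b hbA hdB
  obtain ⟨u0, v0, hu0, hv0, hl0⟩ := hlink
  -- the link is unique
  have huniq : ∀ u v, u ∈ A → v ∈ B → Attacks P u v → u = u0 ∧ v = v0 := by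
    intro u v hu hv hl
    have hueq : u = u0 := by
      by_contra hne
      have hx : u.1 ≠ u0.1 := by
        intro h
        exact hne (Prod.ext h (hA.1.same_row hu hu0))
      rcases lt_or_gt_of_ne hx with h | h
      · exact parallelH_two_links hs ht hA hB hAB hu hv hu0 hv0 hl hl0 h
      · exact parallelH_two_links hs ht hA hB hAB hu0 hv0 hu hv hl0 hl h
    subst hueq
    refine ⟨rfl, ?_⟩
    -- v and v0 are in the same row and the same column
    have hvcol : u.1 = v.1 := by
      rcases hl.cases with ⟨I, hI, huI, hvI, -⟩ | ⟨I, hI, huI, hvI, hcol⟩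
      · exact absurd (maxH_unique hA hB ((maxH_unique hI hA huI hu) ▸ hvI) hv) hAB
      · exact hcol
    have hvcol0 : u.1 = v0.1 := by
      rcases hl0.cases with ⟨I, hI, huI, hvI, -⟩ | ⟨I, hI, huI, hvI, hcol⟩
      · exact absurd (maxH_unique hA hB ((maxH_unique hI hA huI hu) ▸ hvI) hv0) hAB
      · exact hcol
    exact Prod.ext (by omega) (hB.1.same_row hv hv0)
  -- cardinality bounds
  have hcardA : A.card = 2 := by
    by_contra hc3
    have h3 : 3 ≤ A.card := by omega
    have : 2 ≤ (A.erase u0).card := by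
      have := Finset.card_erase_of_mem hu0
      omega
    obtain ⟨a, b, haA, hbA, hab⟩ := Finset.one_lt_card_iff.1 this
    obtain ⟨c, d, hcB, hdB, hcd⟩ := Finset.one_lt_card_iff.1 hB2
    have hnoc : ∀ x y, x ∈ A.erase u0 → y ∈ B → ¬ Attacks P x y := by
      intro x y hx hy hatt
      rw [Finset.mem_erase] at hx
      exact hx.1 (huniq x y hx.2 hy hatt).1
    rw [Finset.mem_erase] at haA hbA
    refine hcfg ⟨a, b, c, d, attacks_of_hseg hA.1 hA.2.1 haA.2 hbA.2 hab,
      attacks_of_hseg hB.1 hB.2.1 hcB hdB hcd, ?_, ?_, ?_, ?_,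
      hnoc a c (Finset.mem_erase.2 haA) hcB, hnoc a d (Finset.mem_erase.2 haA) hdB,
      hnoc b c (Finset.mem_erase.2 hbA) hcB, hnoc b d (Finset.mem_erase.2 hbA) hdB⟩
    · rintro rfl; exact hdisj a haA.2 hcB
    · rintro rfl; exact hdisj a haA.2 hdB
    · rintro rfl; exact hdisj b hbA.2 hcB
    · rintro rfl; exact hdisj b hbA.2 hdB
  have hcardB : B.card = 2 := by
    by_contra hc3
    have h3 : 3 ≤ B.card := by omega
    have : 2 ≤ (B.erase v0).card := by
      have := Finset.card_erase_of_mem hv0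
      omega
    obtain ⟨c, d, hcB, hdB, hcd⟩ := Finset.one_lt_card_iff.1 this
    obtain ⟨a, b, haA, hbA, hab⟩ := Finset.one_lt_card_iff.1 hA2
    have hnoc : ∀ x y, x ∈ A → y ∈ B.erase v0 → ¬ Attacks P x y := by
      intro x y hx hy hatt
      rw [Finset.mem_erase] at hy
      exact hy.1 (huniq x y hx hy.2 hatt).2
    rw [Finset.mem_erase] at hcB hdB
    refine hcfg ⟨a, b, c, d, attacks_of_hseg hA.1 hA.2.1 haA hbA hab,
      attacks_of_hseg hB.1 hB.2.1 hcB.2 hdB.2 hcd, ?_, ?_, ?_, ?_,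
      hnoc a c haA (Finset.mem_erase.2 hcB), hnoc a d haA (Finset.mem_erase.2 hdB),
      hnoc b c hbA (Finset.mem_erase.2 hcB), hnoc b d hbA (Finset.mem_erase.2 hdB)⟩
    · rintro rfl; exact hdisj a haA hcB.2
    · rintro rfl; exact hdisj a haA hdB.2
    · rintro rfl; exact hdisj b hbA hcB.2
    · rintro rfl; exact hdisj b hbA hdB.2
  exact ⟨hcardA, hcardB, u0, v0, hu0, hv0, hl0⟩

end Aux8
section Aux9
open Finset

/-- Vertical version of `parallelH_two_links`. -/
lemma parallelV_two_links {P A B : Finset Cell} (hs : IsSimple P) (ht : IsThin P)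
    (hA : IsMaxVInterval P A) (hB : IsMaxVInterval P B) (hAB : A ≠ B)
    {u v u' v' : Cell} (hu : u ∈ A) (hv : v ∈ B) (hu' : u' ∈ A) (hv' : v' ∈ B)
    (l1 : Attacks P u v) (l2 : Attacks P u' v') (hlt : u.2 < u'.2) : False := by
  have hI : ∃ I, IsMaxHInterval P I ∧ u ∈ I ∧ v ∈ I ∧ u.2 = v.2 := by
    rcases l1.cases with ⟨I, hI, huI, hvI, hrow⟩ | ⟨I, hI, huI, hvI, -⟩
    · exact ⟨I, hI, huI, hvI, hrow⟩
    · exact absurd (maxV_unique hA hB ((maxV_unique hI hA huI hu) ▸ hvI) hv) hAB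
  have hI' : ∃ I, IsMaxHInterval P I ∧ u' ∈ I ∧ v' ∈ I ∧ u'.2 = v'.2 := by
    rcases l2.cases with ⟨I, hI, huI, hvI, hrow⟩ | ⟨I, hI, huI, hvI, -⟩
    · exact ⟨I, hI, huI, hvI, hrow⟩
    · exact absurd (maxV_unique hA hB ((maxV_unique hI hA huI hu') ▸ hvI) hv') hAB
  obtain ⟨I, hIm, huI, hvI, hrow⟩ := hI
  obtain ⟨I', hI'm, huI', hvI', hrow'⟩ := hI'
  have hcolA : u.1 = u'.1 := hA.1.same_col hu hu'
  have hcolB : v.1 = v'.1 := hB.1.same_col hv hv'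
  have hne : u.1 ≠ v.1 := by
    intro h
    exact l1.1 (Prod.ext h hrow)
  apply no_rectangle hs ht (show min u.1 v.1 < max u.1 v.1 by omega) hlt
  intro p hp
  rcases hp with ⟨hp1 | hp1, hp2, hp3⟩ | ⟨hp1 | hp1, hp2, hp3⟩
  · rcases le_total u.1 v.1 with hc | hc
    · exact hA.2.1 (hA.1.mem_of_between' hu hu' (by omega) (by omega) (by omega))
    · exact hB.2.1 (hB.1.mem_of_between' hv hv' (by omega) (by omega) (by omega))
  · rcases le_total u.1 v.1 with hc | hc
    · exact hB.2.1 (hB.1.mem_of_between' hv hv' (by omega) (by omega) (by omega))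
    · exact hA.2.1 (hA.1.mem_of_between' hu hu' (by omega) (by omega) (by omega))
  · exact hIm.2.1 (hIm.1.mem_of_between' huI hvI (by omega) (by omega) (by omega))
  · exact hI'm.2.1 (hI'm.1.mem_of_between' huI' hvI' (by omega) (by omega) (by omega))

/-- Vertical version of `parallelH_structure`. -/
lemma parallelV_structure {P A B : Finset Cell} (hs : IsSimple P) (ht : IsThin P)
    (hcfg : ¬ Config2K2 P) (hA : IsMaxVInterval P A) (hB : IsMaxVInterval P B) (hAB : A ≠ B)
    (hA2 : 2 ≤ A.card) (hB2 : 2 ≤ B.card) :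
    A.card = 2 ∧ B.card = 2 ∧ ∃ u v, u ∈ A ∧ v ∈ B ∧ Attacks P u v := by
  classical
  have hdisj : ∀ x, x ∈ A → x ∉ B := fun x hxA hxB => hAB (maxV_unique hA hB hxA hxB)
  have hlink : ∃ u v, u ∈ A ∧ v ∈ B ∧ Attacks P u v := by
    by_contra hno
    push_neg at hno
    obtain ⟨a, b, haA, hbA, hab⟩ := Finset.one_lt_card_iff.1 hA2
    obtain ⟨c, d, hcB, hdB, hcd⟩ := Finset.one_lt_card_iff.1 hB2
    refine hcfg ⟨a, b, c, d, attacks_of_vseg hA.1 hA.2.1 haA hbA hab,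
      attacks_of_vseg hB.1 hB.2.1 hcB hdB hcd, ?_, ?_, ?_, ?_,
      hno a c haA hcB, hno a d haA hdB, hno b c hbA hcB, hno b d hbA hdB⟩
    · rintro rfl; exact hdisj a haA hcB
    · rintro rfl; exact hdisj a haA hdB
    · rintro rfl; exact hdisj b hbA hcB
    · rintro rfl; exact hdisj b hbA hdB
  obtain ⟨u0, v0, hu0, hv0, hl0⟩ := hlink
  have huniq : ∀ u v, u ∈ A → v ∈ B → Attacks P u v → u = u0 ∧ v = v0 := by
    intro u v hu hv hl
    have hueq : u = u0 := by
      by_contra hne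
      have hx : u.2 ≠ u0.2 := by
        intro h
        exact hne (Prod.ext (hA.1.same_col hu hu0) h)
      rcases lt_or_gt_of_ne hx with h | h
      · exact parallelV_two_links hs ht hA hB hAB hu hv hu0 hv0 hl hl0 h
      · exact parallelV_two_links hs ht hA hB hAB hu0 hv0 hu hv hl0 hl h
    subst hueq
    refine ⟨rfl, ?_⟩
    have hvrow : u.2 = v.2 := by
      rcases hl.cases with ⟨I, hI, huI, hvI, hrow⟩ | ⟨I, hI, huI, hvI, -⟩
      · exact hrow
      · exact absurd (maxV_unique hA hB ((maxV_unique hI hA huI hu) ▸ hvI) hv) hAB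
    have hvrow0 : u.2 = v0.2 := by
      rcases hl0.cases with ⟨I, hI, huI, hvI, hrow⟩ | ⟨I, hI, huI, hvI, -⟩
      · exact hrow
      · exact absurd (maxV_unique hA hB ((maxV_unique hI hA huI hu) ▸ hvI) hv0) hAB
    exact Prod.ext (hB.1.same_col hv hv0) (by omega)
  have hcardA : A.card = 2 := by
    by_contra hc3
    have h3 : 3 ≤ A.card := by omega
    have : 2 ≤ (A.erase u0).card := by
      have := Finset.card_erase_of_mem hu0
      omega
    obtain ⟨a, b, haA, hbA, hab⟩ := Finset.one_lt_card_iff.1 this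
    obtain ⟨c, d, hcB, hdB, hcd⟩ := Finset.one_lt_card_iff.1 hB2
    have hnoc : ∀ x y, x ∈ A.erase u0 → y ∈ B → ¬ Attacks P x y := by
      intro x y hx hy hatt
      rw [Finset.mem_erase] at hx
      exact hx.1 (huniq x y hx.2 hy hatt).1
    rw [Finset.mem_erase] at haA hbA
    refine hcfg ⟨a, b, c, d, attacks_of_vseg hA.1 hA.2.1 haA.2 hbA.2 hab,
      attacks_of_vseg hB.1 hB.2.1 hcB hdB hcd, ?_, ?_, ?_, ?_,
      hnoc a c (Finset.mem_erase.2 haA) hcB, hnoc a d (Finset.mem_erase.2 haA) hdB,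
      hnoc b c (Finset.mem_erase.2 hbA) hcB, hnoc b d (Finset.mem_erase.2 hbA) hdB⟩
    · rintro rfl; exact hdisj a haA.2 hcB
    · rintro rfl; exact hdisj a haA.2 hdB
    · rintro rfl; exact hdisj b hbA.2 hcB
    · rintro rfl; exact hdisj b hbA.2 hdB
  have hcardB : B.card = 2 := by
    by_contra hc3
    have h3 : 3 ≤ B.card := by omega
    have : 2 ≤ (B.erase v0).card := by
      have := Finset.card_erase_of_mem hv0
      omega
    obtain ⟨c, d, hcB, hdB, hcd⟩ := Finset.one_lt_card_iff.1 this
    obtain ⟨a, b, haA, hbA, hab⟩ := Finset.one_lt_card_iff.1 hA2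
    have hnoc : ∀ x y, x ∈ A → y ∈ B.erase v0 → ¬ Attacks P x y := by
      intro x y hx hy hatt
      rw [Finset.mem_erase] at hy
      exact hy.1 (huniq x y hx hy.2 hatt).2
    rw [Finset.mem_erase] at hcB hdB
    refine hcfg ⟨a, b, c, d, attacks_of_vseg hA.1 hA.2.1 haA hbA hab,
      attacks_of_vseg hB.1 hB.2.1 hcB.2 hdB.2 hcd, ?_, ?_, ?_, ?_,
      hnoc a c haA (Finset.mem_erase.2 hcB), hnoc a d haA (Finset.mem_erase.2 hdB),
      hnoc b c hbA (Finset.mem_erase.2 hcB), hnoc b d hbA (Finset.mem_erase.2 hdB)⟩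
    · rintro rfl; exact hdisj a haA hcB.2
    · rintro rfl; exact hdisj a haA hdB.2
    · rintro rfl; exact hdisj b hbA hcB.2
    · rintro rfl; exact hdisj b hbA hdB.2
  exact ⟨hcardA, hcardB, u0, v0, hu0, hv0, hl0⟩

end Aux9
section Aux10
open Finset

lemma thin_square {P : Finset Cell} (ht : IsThin P) {a : Cell} (h1 : a ∈ P)
    (h2 : ((a.1 + 1, a.2) : Cell) ∈ P) (h3 : ((a.1, a.2 + 1) : Cell) ∈ P)
    (h4 : ((a.1 + 1, a.2 + 1) : Cell) ∈ P) : False := by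
  apply ht
  refine ⟨a, ?_⟩
  intro r hr
  simp only [Finset.mem_insert, Finset.mem_singleton] at hr
  rcases hr with rfl | rfl | rfl | rfl <;> assumption

lemma hseg_card_two {S : Finset Cell} (h : IsHSeg S) (hc2 : S.card = 2) {c d : Cell}
    (hc : c ∈ S) (hd : d ∈ S) (hne : c ≠ d) :
    c.2 = d.2 ∧ (c.1 - d.1 = 1 ∨ d.1 - c.1 = 1) := by
  obtain ⟨y, a, b, hab, hS, hcard⟩ := h.exists_rep_card
  have hcm := (hseg_mem_iff hS).1 hc
  have hdm := (hseg_mem_iff hS).1 hd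
  have hx : c.1 ≠ d.1 := by
    intro hx
    exact hne (Prod.ext hx (by omega))
  constructor
  · omega
  · omega

lemma vseg_card_two {S : Finset Cell} (h : IsVSeg S) (hc2 : S.card = 2) {c d : Cell}
    (hc : c ∈ S) (hd : d ∈ S) (hne : c ≠ d) :
    c.1 = d.1 ∧ (c.2 - d.2 = 1 ∨ d.2 - c.2 = 1) := by
  obtain ⟨x, a, b, hab, hS, hcard⟩ := h.exists_rep_card
  have hcm := (vseg_mem_iff hS).1 hc
  have hdm := (vseg_mem_iff hS).1 hd
  have hy : c.2 ≠ d.2 := by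
    intro hy
    exact hne (Prod.ext (by omega) hy)
  constructor
  · omega
  · omega

/-- There cannot be two distinct big maximal H-intervals together with two distinct
big maximal V-intervals. -/
lemma not_two_two {P : Finset Cell} (hs : IsSimple P) (ht : IsThin P) (hcfg : ¬ Config2K2 P)
    {A B I K : Finset Cell} (hA : IsMaxHInterval P A) (hB : IsMaxHInterval P B) (hAB : A ≠ B)
    (hI : IsMaxVInterval P I) (hK : IsMaxVInterval P K) (hIK : I ≠ K)
    (hA2 : 2 ≤ A.card) (hB2 : 2 ≤ B.card) (hI2 : 2 ≤ I.card) (hK2 : 2 ≤ K.card) : False := by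
  obtain ⟨hcA, hcB, -⟩ := parallelH_structure hs ht hcfg hA hB hAB hA2 hB2
  obtain ⟨hcI, hcK, -⟩ := parallelV_structure hs ht hcfg hI hK hIK hI2 hK2
  obtain ⟨⟨p, hp⟩, -⟩ := perp_structure hcfg hA hI hA2 hI2
  obtain ⟨⟨q, hq⟩, -⟩ := perp_structure hcfg hA hK hA2 hK2
  obtain ⟨⟨p', hp'⟩, -⟩ := perp_structure hcfg hB hI hB2 hI2
  obtain ⟨⟨q', hq'⟩, -⟩ := perp_structure hcfg hB hK hB2 hK2
  rw [Finset.mem_inter] at hp hq hp' hq'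
  have hpq : p ≠ q := fun h => hIK (maxV_unique hI hK hp.2 (h ▸ hq.2))
  have hpp' : p ≠ p' := fun h => hAB (maxH_unique hA hB hp.1 (h ▸ hp'.1))
  have hqq' : q ≠ q' := fun h => hAB (maxH_unique hA hB hq.1 (h ▸ hq'.1))
  have hp'q' : p' ≠ q' := fun h => hIK (maxV_unique hI hK hp'.2 (h ▸ hq'.2))
  obtain ⟨hA1, hA2'⟩ := hseg_card_two hA.1 hcA hp.1 hq.1 hpq
  obtain ⟨hB1, hB2'⟩ := hseg_card_two hB.1 hcB hp'.1 hq'.1 hp'q'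
  obtain ⟨hI1, hI2'⟩ := vseg_card_two hI.1 hcI hp.2 hp'.2 hpp'
  obtain ⟨hK1, hK2'⟩ := vseg_card_two hK.1 hcK hq.2 hq'.2 hqq'
  have hpP : p ∈ P := hA.2.1 hp.1
  have hqP : q ∈ P := hA.2.1 hq.1
  have hp'P : p' ∈ P := hB.2.1 hp'.1
  have hq'P : q' ∈ P := hB.2.1 hq'.1
  rcases le_total p.1 q.1 with h1 | h1 <;> rcases le_total p.2 p'.2 with h2 | h2 <;>
  · refine thin_square ht (a := (min p.1 q.1, min p.2 p'.2)) ?_ ?_ ?_ ?_ <;>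
    first
      | (rw [show ((min p.1 q.1, min p.2 p'.2) : Cell) = p from Prod.ext (by omega) (by omega)]
         exact hpP)
      | (rw [show ((min p.1 q.1, min p.2 p'.2) : Cell) = q from Prod.ext (by omega) (by omega)]
         exact hqP)
      | (rw [show ((min p.1 q.1, min p.2 p'.2) : Cell) = p' from Prod.ext (by omega) (by omega)]
         exact hp'P)
      | (rw [show ((min p.1 q.1, min p.2 p'.2) : Cell) = q' from Prod.ext (by omega) (by omega)]
         exact hq'P)
      | (rw [show ((min p.1 q.1 + 1, min p.2 p'.2) : Cell) = p from Prod.ext (by omega) (by omega)]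
         exact hpP)
      | (rw [show ((min p.1 q.1 + 1, min p.2 p'.2) : Cell) = q from Prod.ext (by omega) (by omega)]
         exact hqP)
      | (rw [show ((min p.1 q.1 + 1, min p.2 p'.2) : Cell) = p' from Prod.ext (by omega) (by omega)]
         exact hp'P)
      | (rw [show ((min p.1 q.1 + 1, min p.2 p'.2) : Cell) = q' from Prod.ext (by omega) (by omega)]
         exact hq'P)
      | (rw [show ((min p.1 q.1, min p.2 p'.2 + 1) : Cell) = p from Prod.ext (by omega) (by omega)]
         exact hpP)
      | (rw [show ((min p.1 q.1, min p.2 p'.2 + 1) : Cell) = q from Prod.ext (by omega) (by omega)]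
         exact hqP)
      | (rw [show ((min p.1 q.1, min p.2 p'.2 + 1) : Cell) = p' from Prod.ext (by omega) (by omega)]
         exact hp'P)
      | (rw [show ((min p.1 q.1, min p.2 p'.2 + 1) : Cell) = q' from Prod.ext (by omega) (by omega)]
         exact hq'P)
      | (rw [show ((min p.1 q.1 + 1, min p.2 p'.2 + 1) : Cell) = p from Prod.ext (by omega) (by omega)]
         exact hpP)
      | (rw [show ((min p.1 q.1 + 1, min p.2 p'.2 + 1) : Cell) = q from Prod.ext (by omega) (by omega)]
         exact hqP)
      | (rw [show ((min p.1 q.1 + 1, min p.2 p'.2 + 1) : Cell) = p' from Prod.ext (by omega) (by omega)]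
         exact hp'P)
      | (rw [show ((min p.1 q.1 + 1, min p.2 p'.2 + 1) : Cell) = q' from Prod.ext (by omega) (by omega)]
         exact hq'P)

end Aux10
section Aux11
open Finset

/-- Builder for short brushes. -/
lemma shortBrush_build {P J : Finset Cell} (hP : IsPolyomino P) (hs : IsSimple P)
    (ht : IsThin P) (hJ : IsMaxInterval P J)
    (hbig : ∀ I, IsMaxInterval P I → 2 ≤ I.card → I ≠ J → (I ∩ J).Nonempty ∧ I.card ≤ 2) :
    IsShortBrush P := by
  refine ⟨J, ⟨hP, hs, ht, hJ, fun I h1 h2 h3 => (hbig I h1 h2 h3).1, ?_⟩, ?_⟩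
  · intro c hc
    by_cases h2 : 2 ≤ P.card
    · obtain ⟨I, hI1, hI2, hI3⟩ := mem_big_interval hP h2 hc
      exact Or.inr ⟨I, hI1, hI2, hI3⟩
    · left
      have hJP : J ⊆ P := by rcases hJ with h | h <;> exact h.2.1
      have hJne : J.Nonempty := by
        rcases hJ with h | h
        · exact h.1.nonempty
        · exact h.1.nonempty
      obtain ⟨j, hj⟩ := hJne
      have h1 : P.card = 1 := by
        have := Finset.card_pos.2 hP.1
        omega
      obtain ⟨x, hx⟩ := Finset.card_eq_one.1 h1
      subst hx
      rw [Finset.mem_singleton] at hc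
      have := hJP hj
      rw [Finset.mem_singleton] at this
      rw [hc, ← this]
      exact hj
  · intro I hI hIJ
    by_contra hcon
    push_neg at hcon
    exact absurd ((hbig I hI (by omega) hIJ).2) (by omega)

/-- Main combinatorial theorem: no 2K2 configuration implies short brush. -/
lemma shortBrush_of_no2K2 {P : Finset Cell} (hP : IsPolyomino P) (hs : IsSimple P)
    (ht : IsThin P) (hcfg : ¬ Config2K2 P) : IsShortBrush P := by
  classical
  obtain ⟨c0, hc0⟩ := hP.1
  by_cases hP2 : 2 ≤ P.card
  swap
  · -- singleton polyomino
    obtain ⟨J, hJ, -⟩ := exists_maxH_mem hc0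
    refine shortBrush_build hP hs ht (Or.inl hJ) ?_
    intro I hImax hI2 hIJ
    exfalso
    have hIP : I ⊆ P := by rcases hImax with h | h <;> exact h.2.1
    have := Finset.card_le_card hIP
    omega
  · obtain ⟨I0, hI0max, hI02, -⟩ := mem_big_interval hP hP2 hc0
    by_cases h2H : ∃ A B : Finset Cell, (IsMaxHInterval P A ∧ 2 ≤ A.card) ∧
        (IsMaxHInterval P B ∧ 2 ≤ B.card) ∧ A ≠ B
    · -- two distinct big horizontal intervals: vertical handle
      obtain ⟨A, B, ⟨hA, hA2⟩, ⟨hB, hB2⟩, hAB⟩ := h2H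
      obtain ⟨-, -, u, v, hu, hv, hatt⟩ := parallelH_structure hs ht hcfg hA hB hAB hA2 hB2
      obtain ⟨J0, hJ0, huJ, hvJ⟩ : ∃ J0, IsMaxVInterval P J0 ∧ u ∈ J0 ∧ v ∈ J0 := by
        rcases hatt.cases with ⟨I, hI, huI, hvI, -⟩ | ⟨I, hI, huI, hvI, -⟩
        · exact absurd (maxH_unique hA hB ((maxH_unique hI hA huI hu) ▸ hvI) hv) hAB
        · exact ⟨I, hI, huI, hvI⟩
      have hJ02 : 2 ≤ J0.card := Finset.one_lt_card_iff.2 ⟨u, v, huJ, hvJ, hatt.1⟩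
      refine shortBrush_build hP hs ht (Or.inr hJ0) ?_
      intro I hImax hI2 hIJ
      rcases hImax with hIH | hIV
      · -- big horizontal interval
        have hcard : I.card = 2 := by
          by_cases hIA : I = A
          · subst hIA
            exact (parallelH_structure hs ht hcfg hIH hB hAB hI2 hB2).1
          · exact (parallelH_structure hs ht hcfg hIH hA hIA hI2 hA2).1
        exact ⟨(perp_structure hcfg hIH hJ0 hI2 hJ02).1, by omega⟩
      · exact absurd (not_two_two hs ht hcfg hA hB hAB hJ0 hIV (Ne.symm hIJ) hA2 hB2 hJ02 hI2) id
    · by_cases h2V : ∃ A B : Finset Cell, (IsMaxVInterval P A ∧ 2 ≤ A.card) ∧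
          (IsMaxVInterval P B ∧ 2 ≤ B.card) ∧ A ≠ B
      · -- two distinct big vertical intervals: horizontal handle
        obtain ⟨A, B, ⟨hA, hA2⟩, ⟨hB, hB2⟩, hAB⟩ := h2V
        obtain ⟨-, -, u, v, hu, hv, hatt⟩ := parallelV_structure hs ht hcfg hA hB hAB hA2 hB2
        obtain ⟨J0, hJ0, huJ, hvJ⟩ : ∃ J0, IsMaxHInterval P J0 ∧ u ∈ J0 ∧ v ∈ J0 := by
          rcases hatt.cases with ⟨I, hI, huI, hvI, -⟩ | ⟨I, hI, huI, hvI, -⟩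
          · exact ⟨I, hI, huI, hvI⟩
          · exact absurd (maxV_unique hA hB ((maxV_unique hI hA huI hu) ▸ hvI) hv) hAB
        have hJ02 : 2 ≤ J0.card := Finset.one_lt_card_iff.2 ⟨u, v, huJ, hvJ, hatt.1⟩
        refine shortBrush_build hP hs ht (Or.inl hJ0) ?_
        intro I hImax hI2 hIJ
        rcases hImax with hIH | hIV
        · -- big horizontal interval distinct from the handle: impossible
          push_neg at h2H
          exact absurd (h2H J0 I ⟨hJ0, hJ02⟩ ⟨hIH, hI2⟩) (fun h => hIJ h.symm)
        · have hcard : I.card = 2 := by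
            by_cases hIA : I = A
            · subst hIA
              exact (parallelV_structure hs ht hcfg hIV hB hAB hI2 hB2).1
            · exact (parallelV_structure hs ht hcfg hIV hA hIA hI2 hA2).1
          refine ⟨?_, by omega⟩
          rw [Finset.inter_comm]
          exact (perp_structure hcfg hJ0 hIV hJ02 hI2).1
      · -- at most one big interval of each direction
        push_neg at h2H
        push_neg at h2V
        rcases hI0max with hI0H | hI0V
        · by_cases hBV : ∃ B0, IsMaxVInterval P B0 ∧ 2 ≤ B0.card
          · obtain ⟨B0, hB0, hB02⟩ := hBV
            obtain ⟨hmeet, hc2⟩ := perp_structure hcfg hI0H hB0 hI02 hB02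
            rcases hc2 with hcI0 | hcB0
            · -- horizontal handle is small: vertical handle B0
              refine shortBrush_build hP hs ht (Or.inr hB0) ?_
              intro I hImax hI2 hIJ
              rcases hImax with hIH | hIV
              · have : I = I0 := h2H I I0 ⟨hIH, hI2⟩ ⟨hI0H, hI02⟩
                subst this
                exact ⟨hmeet, by omega⟩
              · exact absurd (h2V I B0 ⟨hIV, hI2⟩ ⟨hB0, hB02⟩) hIJ
            · -- vertical interval is small: horizontal handle I0
              refine shortBrush_build hP hs ht (Or.inl hI0H) ?_
              intro I hImax hI2 hIJ
              rcases hImax with hIH | hIV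
              · exact absurd (h2H I I0 ⟨hIH, hI2⟩ ⟨hI0H, hI02⟩) hIJ
              · have : I = B0 := h2V I B0 ⟨hIV, hI2⟩ ⟨hB0, hB02⟩
                subst this
                refine ⟨?_, by omega⟩
                rw [Finset.inter_comm]
                exact hmeet
          · -- no big vertical interval at all: handle I0
            refine shortBrush_build hP hs ht (Or.inl hI0H) ?_
            intro I hImax hI2 hIJ
            rcases hImax with hIH | hIV
            · exact absurd (h2H I I0 ⟨hIH, hI2⟩ ⟨hI0H, hI02⟩) hIJ
            · exact absurd ⟨I, hIV, hI2⟩ hBV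
        · by_cases hBH : ∃ B0, IsMaxHInterval P B0 ∧ 2 ≤ B0.card
          · obtain ⟨B0, hB0, hB02⟩ := hBH
            obtain ⟨hmeet, hc2⟩ := perp_structure hcfg hB0 hI0V hB02 hI02
            rcases hc2 with hcB0 | hcI0
            · -- horizontal interval is small: vertical handle I0
              refine shortBrush_build hP hs ht (Or.inr hI0V) ?_
              intro I hImax hI2 hIJ
              rcases hImax with hIH | hIV
              · have : I = B0 := h2H I B0 ⟨hIH, hI2⟩ ⟨hB0, hB02⟩
                subst this
                exact ⟨hmeet, by omega⟩
              · exact absurd (h2V I I0 ⟨hIV, hI2⟩ ⟨hI0V, hI02⟩) hIJ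
            · -- vertical handle is small: horizontal handle B0
              refine shortBrush_build hP hs ht (Or.inl hB0) ?_
              intro I hImax hI2 hIJ
              rcases hImax with hIH | hIV
              · exact absurd (h2H I B0 ⟨hIH, hI2⟩ ⟨hB0, hB02⟩) hIJ
              · have : I = I0 := h2V I I0 ⟨hIV, hI2⟩ ⟨hI0V, hI02⟩
                subst this
                refine ⟨?_, by omega⟩
                rw [Finset.inter_comm]
                exact hmeet
          · refine shortBrush_build hP hs ht (Or.inr hI0V) ?_
            intro I hImax hI2 hIJ
            rcases hImax with hIH | hIV
            · exact absurd ⟨I, hIH, hI2⟩ hBH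
            · exact absurd (h2V I I0 ⟨hIV, hI2⟩ ⟨hI0V, hI02⟩) hIJ

end Aux11
section Aux12

/-- In `ZMod n` (`n ≥ 4`), there is no set `S` whose elements are pairwise cyclically
consecutive and which meets every pair `{i, i+1}`. -/
lemma zmod_no_sparse_dominating (n : ℕ) (hn : 4 ≤ n) (S : ZMod n → Prop)
    (hpair : ∀ i j, S i → S j → i ≠ j → (i = j + 1 ∨ j = i + 1))
    (hcons : ∀ i, S i ∨ S (i + 1)) : False := by
  have hne : ∀ a b : ℕ, a < b → b - a < n → ((a : ZMod n) ≠ (b : ZMod n)) := by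
    intro a b hab hbn h
    rw [ZMod.natCast_eq_natCast_iff] at h
    have hd := (Nat.modEq_iff_dvd' (le_of_lt hab)).1 h
    have := Nat.le_of_dvd (by omega) hd
    omega
  have e : ∀ k : ℕ, ((k : ZMod n) + 1) = ((k + 1 : ℕ) : ZMod n) := by
    intro k; push_cast; ring
  have ex : ∀ a : ℕ, ¬ (S (a : ZMod n) ∧ S ((a + 2 : ℕ) : ZMod n)) := by
    rintro a ⟨h1, h2⟩
    rcases hpair _ _ h1 h2 (hne a (a + 2) (by omega) (by omega)) with h | h
    · rw [e (a + 2)] at h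
      exact hne a (a + 3) (by omega) (by omega) h
    · rw [e a] at h
      exact hne (a + 1) (a + 2) (by omega) (by omega) h.symm
  have h0 := hcons ((0 : ℕ) : ZMod n); rw [e 0] at h0
  have h1 := hcons ((1 : ℕ) : ZMod n); rw [e 1] at h1
  have h2 := hcons ((2 : ℕ) : ZMod n); rw [e 2] at h2
  have h3 := hcons ((3 : ℕ) : ZMod n); rw [e 3] at h3
  rcases h0 with h0 | h0
  · rcases h1 with h1 | h1
    · rcases h2 with h2 | h2
      · exact ex 0 ⟨h0, h2⟩
      · exact ex 1 ⟨h1, h2⟩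
    · exact ex 0 ⟨h0, h1⟩
  · rcases h2 with h2 | h2
    · rcases h3 with h3 | h3
      · exact ex 1 ⟨h0, h3⟩
      · exact ex 2 ⟨h2, h3⟩
    · exact ex 1 ⟨h0, h2⟩
end Aux12
section Aux13
open Finset

lemma chordal_of_shortBrush {P : Finset Cell} (hsb : IsShortBrush P) : IsChordal (GBar P) := by
  obtain ⟨J, ⟨hpoly, hsimple, hthin, hJmax, hmeet, hcover⟩, hshort⟩ := hsb
  intro n hn hcyc
  obtain ⟨-, f, hinj, hiff⟩ := hcyc
  have F1 : ∀ u v : Cell, u ∈ J → v ∈ J → u ≠ v → Attacks P u v := by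
    intro u v hu hv huv
    rcases hJmax with h | h
    · exact attacks_of_hseg h.1 h.2.1 hu hv huv
    · exact attacks_of_vseg h.1 h.2.1 hu hv huv
  have F2 : ∀ c c' : Cell, c ∉ J → c' ∉ J → ¬ Attacks P c c' := by
    intro c c' hc hc' hatt
    obtain ⟨hne, I, hImax, hcI, hc'I⟩ := hatt
    have hIJ : I ≠ J := fun h => hc (h ▸ hcI)
    have hI2 : 2 ≤ I.card := Finset.one_lt_card_iff.2 ⟨c, c', hcI, hc'I, hne⟩
    obtain ⟨j, hj⟩ := hmeet I hImax hI2 hIJ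
    rw [Finset.mem_inter] at hj
    have hjc : j ≠ c := fun h => hc (h ▸ hj.2)
    have hjc' : j ≠ c' := fun h => hc' (h ▸ hj.2)
    have h3 : 3 ≤ I.card := by
      have hsub : ({j, c, c'} : Finset Cell) ⊆ I := by
        intro x hx
        simp only [Finset.mem_insert, Finset.mem_singleton] at hx
        rcases hx with rfl | rfl | rfl
        · exact hj.1
        · exact hcI
        · exact hc'I
      have hcard : ({j, c, c'} : Finset Cell).card = 3 := by
        rw [Finset.card_insert_of_notMem (by simp [hjc, hjc']),
          Finset.card_insert_of_notMem (by simp [hne]), Finset.card_singleton]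
      have := Finset.card_le_card hsub
      omega
    exact absurd (hshort I hImax hIJ) (by omega)
  have hconsec : ∀ i : ZMod n, (f i : Cell) ≠ (f (i+1) : Cell) ∧
      ¬ Attacks P (f i : Cell) (f (i+1) : Cell) := by
    intro i
    have hadj := (hiff i (i+1)).2 (Or.inr rfl)
    obtain ⟨h1, h2⟩ := hadj
    exact ⟨fun h => h1 (Subtype.ext h), h2⟩
  have hfar : ∀ i j : ZMod n, i ≠ j → i ≠ j + 1 → j ≠ i + 1 →
      Attacks P (f i : Cell) (f j : Cell) := by
    intro i j h1 h2 h3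
    by_contra hno
    have hadj : (GBar P).Adj (f i) (f j) := ⟨fun h => h1 (hinj h), hno⟩
    rw [hiff] at hadj
    tauto
  apply zmod_no_sparse_dominating n hn (fun i => (f i : Cell) ∉ J)
  · intro i j hi hj hij
    by_contra hcon
    push_neg at hcon
    exact F2 _ _ hi hj (hfar i j hij hcon.1 hcon.2)
  · intro i
    by_contra hcon
    push_neg at hcon
    exact (hconsec i).2 (F1 _ _ hcon.1 hcon.2 (hconsec i).1)

end Aux13
/-- For a simple thin polyomino `P`, the graph `Ḡ_P` is chordal iff `P` is a
short brush polyomino. -/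
theorem statement11 (P : Finset Cell) (hP : IsPolyomino P) (hs : IsSimple P)
    (ht : IsThin P) :
    IsChordal (GBar P) ↔ IsShortBrush P := by
  constructor
  · intro hch
    apply shortBrush_of_no2K2 hP hs ht
    intro hcfg
    exact hcfg.not_chordal hch
  · exact chordal_of_shortBrush
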